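/- Let q be a prime power, h ≥ 2, and f : F_{q^h} → F_q a nonzero F_q-linear map. Then there exist α ∈ F_{q^h} \ F_q and a nonzero F_q-linear map g : F_{q^h} → F_q such that g(1) = g(α) = 1, f(1/α) ≠ 0, and f((k−1)/(k(k−1)α − k²)) ≠ 1 for every k ∈ F_q with k ≠ 0,1. In particular, the number of α ∈ F_{q^h} \ F_q satisfying the conditions on f is at least q^{h-1} − q + 1 > 0. -/

import Mathlib

open Set

private lemma aux_biUnion_ncard {α β : Type*} [DecidableEq α] (T : Finset α) (S : α → Set β)
    (m : ℕ) (hS : ∀ k ∈ T, (S k).ncard ≤ m) : (⋃ k ∈ T, S k).ncard ≤ T.card * m := by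
  induction T using Finset.induction_on with
  | empty => simp
  | @insert a s ha ih =>
      rw [Finset.set_biUnion_insert, Finset.card_insert_of_notMem ha]
      calc (S a ∪ ⋃ k ∈ s, S k).ncard
          ≤ (S a).ncard + (⋃ k ∈ s, S k).ncard := Set.ncard_union_le _ _
        _ ≤ m + s.card * m := add_le_add (hS a (Finset.mem_insert_self a s))
            (ih fun k hk => hS k (Finset.mem_insert_of_mem hk))
        _ = (s.card + 1) * m := by ring

set_option maxHeartbeats 1000000 in
/-- For any nonzero `F_q`-linear `f : F_{q^h} → F_q` there exist
`α ∈ F_{q^h} \ F_q` and a nonzero `F_q`-linear `g` with `g(1) = g(α) = 1` such that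
`f(1/α) ≠ 0` and `f((k−1)/(k(k−1)α − k²)) ≠ 1` for all `k ∈ F_q \ {0,1}`; moreover the
number of suitable `α` is at least `q^(h-1) − q + 1 > 0`. -/
theorem stmt_12 {F K : Type*} [Field F] [Field K] [Algebra F K]
    [Fintype F] [Fintype K]
    (q h : ℕ) (hq : IsPrimePow q) (hcard : Fintype.card F = q)
    (hh : 2 ≤ h) (hrank : Module.finrank F K = h)
    (f : K →ₗ[F] F) (hf : f ≠ 0)
    (A : Set K)
    (hA : A = {α : K | α ∉ Set.range (algebraMap F K) ∧ f (1 / α) ≠ 0 ∧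
      ∀ k : F, k ≠ 0 → k ≠ 1 →
        f ((algebraMap F K k - 1) /
          (algebraMap F K k * (algebraMap F K k - 1) * α - algebraMap F K k ^ 2)) ≠ 1}) :
    (∃ α ∈ A, ∃ g : K →ₗ[F] F, g ≠ 0 ∧ g 1 = 1 ∧ g α = 1) ∧
    (q : ℤ) ^ (h - 1) - q + 1 ≤ A.ncard ∧
    (0 : ℤ) < (q : ℤ) ^ (h - 1) - q + 1 := by
  classical
  have hq2 : 2 ≤ q := hq.two_le
  have hq1 : 1 ≤ q := le_trans one_le_two hq2
  -- cardinality of K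
  have hcardK : Fintype.card K = q ^ h := by
    rw [Module.card_eq_pow_finrank (K := F) (V := K), hcard, hrank]
  -- f is surjective
  obtain ⟨x0, hx0⟩ : ∃ x, f x ≠ 0 := by
    by_contra hc; push_neg at hc
    exact hf (LinearMap.ext fun x => by rw [hc x]; rfl)
  have hsurj : Function.Surjective f := fun c =>
    ⟨(c * (f x0)⁻¹) • x0, by
      rw [map_smul, smul_eq_mul, mul_assoc, inv_mul_cancel₀ hx0, mul_one]⟩
  have hrange : LinearMap.range f = ⊤ := LinearMap.range_eq_top.mpr hsurj
  have hkerrank : Module.finrank F (LinearMap.ker f) = h - 1 := by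
    have h2 := LinearMap.finrank_range_add_finrank_ker f
    rw [hrange, finrank_top, Module.finrank_self, hrank] at h2
    omega
  have hkercard : Fintype.card (LinearMap.ker f) = q ^ (h - 1) := by
    rw [Module.card_eq_pow_finrank (K := F) (V := LinearMap.ker f), hcard, hkerrank]
  have hker0 : (f ⁻¹' {0} : Set K).ncard = q ^ (h - 1) := by
    have h1 : (f ⁻¹' {0} : Set K) = (LinearMap.ker f : Set K) := by
      ext x; simp [LinearMap.mem_ker]
    rw [h1, ← Nat.card_coe_set_eq]
    rw [Nat.card_eq_fintype_card] at *
    exact hkercard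
  -- all fibers of f have size q^(h-1)
  have hfiber : ∀ c : F, (f ⁻¹' {c} : Set K).ncard = q ^ (h - 1) := by
    intro c
    obtain ⟨x, hx⟩ := hsurj c
    have himg : (fun β => β + x) '' (f ⁻¹' {0}) = f ⁻¹' {c} := by
      ext y
      constructor
      · rintro ⟨β, hβ, rfl⟩
        simp only [Set.mem_preimage, Set.mem_singleton_iff] at *
        rw [map_add, hβ, hx, zero_add]
      · intro hy
        simp only [Set.mem_preimage, Set.mem_singleton_iff] at hy
        refine ⟨y - x, ?_, by simp⟩
        simp only [Set.mem_preimage, Set.mem_singleton_iff, map_sub, hy, hx, sub_self]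
    rw [← himg, Set.ncard_image_of_injective _ (add_left_injective x), hker0]
  set SF : Set K := Set.range (algebraMap F K) with hSF
  set B0 : Set K := {α : K | f (1 / α) = 0} with hB0
  have hSFcard : SF.ncard = q := by
    rw [hSF, ← Set.image_univ, Set.ncard_image_of_injective _ (algebraMap F K).injective,
      Set.ncard_univ, Nat.card_eq_fintype_card, hcard]
  have hB0eq : B0 = (fun α : K => α⁻¹) '' (f ⁻¹' {0}) := by
    ext α
    simp only [hB0, Set.mem_setOf_eq, Set.mem_image, Set.mem_preimage, Set.mem_singleton_iff]
    constructor
    · intro hα; exact ⟨α⁻¹, by rwa [← one_div], inv_inv α⟩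
    · rintro ⟨β, hβ, rfl⟩; rwa [one_div, inv_inv]
  have hB0card : B0.ncard = q ^ (h - 1) := by
    rw [hB0eq, Set.ncard_image_of_injective _ inv_injective, hker0]
  have h0B0 : (0 : K) ∈ B0 := by simp [hB0]
  -- the Möbius-type maps are injective
  have hφinj : ∀ k : F, k ≠ 0 → k ≠ 1 → Function.Injective (fun α : K =>
      (algebraMap F K k - 1) /
        (algebraMap F K k * (algebraMap F K k - 1) * α - algebraMap F K k ^ 2)) := by
    intro k hk0 hk1 α α' heq
    simp only at heq
    set c : K := algebraMap F K k - 1 with hc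
    set a : K := algebraMap F K k * (algebraMap F K k - 1) with ha
    have hkK : algebraMap F K k ≠ 0 := fun hcon =>
      hk0 ((algebraMap F K).injective (by simpa using hcon))
    have hcne : c ≠ 0 := by
      rw [hc, sub_ne_zero]
      intro hcon
      exact hk1 ((algebraMap F K).injective (by rw [hcon, map_one]))
    have hane : a ≠ 0 := mul_ne_zero hkK hcne
    have hdeq : a * α - algebraMap F K k ^ 2 = a * α' - algebraMap F K k ^ 2 := by
      by_cases hd : a * α - algebraMap F K k ^ 2 = 0
      · by_cases hd' : a * α' - algebraMap F K k ^ 2 = 0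
        · rw [hd, hd']
        · rw [hd, div_zero] at heq
          exact absurd heq.symm (div_ne_zero hcne hd')
      · by_cases hd' : a * α' - algebraMap F K k ^ 2 = 0
        · rw [hd', div_zero] at heq
          exact absurd heq (div_ne_zero hcne hd)
        · have h3 := (div_eq_div_iff hd hd').mp heq
          exact (mul_left_cancel₀ hcne (by linear_combination h3)).symm
    have : a * α = a * α' := by linear_combination hdeq
    exact mul_left_cancel₀ hane this
  -- each bad set for k has at most q^(h-1) elements
  have hBk : ∀ k : F, k ≠ 0 → k ≠ 1 →
      ({α : K | f ((algebraMap F K k - 1) /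
        (algebraMap F K k * (algebraMap F K k - 1) * α - algebraMap F K k ^ 2)) = 1}).ncard
        ≤ q ^ (h - 1) := by
    intro k hk0 hk1
    set φ : K → K := fun α : K =>
      (algebraMap F K k - 1) /
        (algebraMap F K k * (algebraMap F K k - 1) * α - algebraMap F K k ^ 2) with hφ
    have hsub : {α : K | f (φ α) = 1} = φ ⁻¹' (f ⁻¹' {1}) := rfl
    rw [hsub]
    calc (φ ⁻¹' (f ⁻¹' {1})).ncard
        = (φ '' (φ ⁻¹' (f ⁻¹' {1}))).ncard :=
          (Set.ncard_image_of_injective _ (hφinj k hk0 hk1)).symm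
      _ ≤ (f ⁻¹' {1} : Set K).ncard :=
          Set.ncard_le_ncard (Set.image_preimage_subset _ _) (Set.toFinite _)
      _ = q ^ (h - 1) := hfiber 1
  set T : Finset F := Finset.univ \ {0, 1} with hT
  have hTcard : T.card = q - 2 := by
    rw [hT, Finset.card_sdiff_of_subset (Finset.subset_univ _), Finset.card_univ, hcard,
      Finset.card_pair (zero_ne_one)]
  set U : Set K := ⋃ k ∈ T, {α : K | f ((algebraMap F K k - 1) /
      (algebraMap F K k * (algebraMap F K k - 1) * α - algebraMap F K k ^ 2)) = 1} with hU
  have hUcard : U.ncard ≤ (q - 2) * q ^ (h - 1) := by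
    rw [hU, ← hTcard]
    refine aux_biUnion_ncard T _ _ (fun k hk => ?_)
    rw [hT, Finset.mem_sdiff] at hk
    simp only [Finset.mem_insert, Finset.mem_singleton, not_or] at hk
    exact hBk k hk.2.1 hk.2.2
  -- complement inclusion
  have hsubc : Aᶜ ⊆ SF ∪ ((B0 \ {0}) ∪ U) := by
    intro α hα
    rw [hA] at hα
    by_cases hr : α ∈ SF
    · exact Or.inl hr
    by_cases hz : f (1 / α) = 0
    · by_cases h0 : α = 0
      · exact absurd (⟨0, by simp [h0]⟩ : α ∈ Set.range (algebraMap F K)) hr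
      · exact Or.inr (Or.inl ⟨hz, h0⟩)
    · right; right
      have hP3 : ¬ ∀ k : F, k ≠ 0 → k ≠ 1 →
          f ((algebraMap F K k - 1) /
            (algebraMap F K k * (algebraMap F K k - 1) * α - algebraMap F K k ^ 2)) ≠ 1 :=
        fun hP3 => hα ⟨hr, hz, hP3⟩
      push_neg at hP3
      obtain ⟨k, hk0, hk1, hkeq⟩ := hP3
      rw [hU]
      exact Set.mem_iUnion₂.mpr ⟨k, by
        rw [hT, Finset.mem_sdiff]
        simp [hk0, hk1], hkeq⟩
  have hdiffcard : (B0 \ {0}).ncard = q ^ (h - 1) - 1 := by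
    rw [Set.ncard_diff (by simpa using h0B0) (Set.toFinite _), hB0card, Set.ncard_singleton]
  have hcomplcard : (Aᶜ : Set K).ncard ≤ q + ((q ^ (h - 1) - 1) + (q - 2) * q ^ (h - 1)) := by
    calc (Aᶜ : Set K).ncard ≤ (SF ∪ ((B0 \ {0}) ∪ U)).ncard :=
          Set.ncard_le_ncard hsubc (Set.toFinite _)
      _ ≤ SF.ncard + ((B0 \ {0}) ∪ U).ncard := Set.ncard_union_le _ _
      _ ≤ SF.ncard + ((B0 \ {0}).ncard + U.ncard) :=
          Nat.add_le_add_left (Set.ncard_union_le _ _) _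
      _ ≤ q + ((q ^ (h - 1) - 1) + (q - 2) * q ^ (h - 1)) := by
          rw [hSFcard, hdiffcard]
          exact Nat.add_le_add_left (Nat.add_le_add_left hUcard _) _
  have hsum : A.ncard + (Aᶜ : Set K).ncard = q ^ h := by
    rw [Set.ncard_add_ncard_compl A (Set.toFinite _) (Set.toFinite _),
      Nat.card_eq_fintype_card, hcardK]
  have hpow1 : q ≤ q ^ (h - 1) := by
    calc q = q ^ 1 := (pow_one q).symm
      _ ≤ q ^ (h - 1) := Nat.pow_le_pow_right hq1 (by omega)
  have hpos : (0 : ℤ) < (q : ℤ) ^ (h - 1) - q + 1 := by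
    have h5 : (q : ℤ) ≤ (q : ℤ) ^ (h - 1) := by exact_mod_cast hpow1
    linarith
  have h1le : 1 ≤ q ^ (h - 1) := le_trans hq1 hpow1
  have hbound : (q : ℤ) ^ (h - 1) - q + 1 ≤ A.ncard := by
    have hc2 : ((Aᶜ : Set K).ncard : ℤ) ≤
        (q : ℤ) + (((q : ℤ) ^ (h - 1) - 1) + ((q : ℤ) - 2) * (q : ℤ) ^ (h - 1)) := by
      zify [h1le, hq2] at hcomplcard
      linarith [hcomplcard]
    have hcast : (A.ncard : ℤ) + ((Aᶜ : Set K).ncard : ℤ) = (q : ℤ) ^ h := by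
      exact_mod_cast congrArg (Nat.cast : ℕ → ℤ) hsum
    have hpowh : (q : ℤ) ^ h = (q : ℤ) ^ (h - 1) * q := by
      rw [← pow_succ]
      congr 1
      omega
    nlinarith [hc2, hcast, hpowh]
  -- A is nonempty
  have hne : A.Nonempty := by
    rw [← Set.ncard_pos (Set.toFinite A)]
    have h7 : (0 : ℤ) < (A.ncard : ℤ) := lt_of_lt_of_le hpos hbound
    exact_mod_cast h7
  obtain ⟨α, hαA⟩ := hne
  have hαnr : α ∉ Set.range (algebraMap F K) := by
    rw [hA] at hαA; exact hαA.1
  have hαn1 : α ∉ ({1} : Set K) := by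
    simp only [Set.mem_singleton_iff]
    intro hcon; exact hαnr ⟨1, by simp [hcon]⟩
  have hli : LinearIndepOn F id (insert α {1} : Set K) := by
    rw [linearIndepOn_id_insert hαn1]
    refine ⟨(linearIndepOn_singleton_iff F).mpr one_ne_zero, ?_⟩
    intro hmem
    rw [Submodule.mem_span_singleton] at hmem
    obtain ⟨c, hc⟩ := hmem
    exact hαnr ⟨c, by rw [← hc, Algebra.algebraMap_eq_smul_one]⟩
  let b := Module.Basis.extend hli
  let g : K →ₗ[F] F := b.constr F (fun _ => (1 : F))
  have hmem1 : (1 : K) ∈ hli.extend (Set.subset_univ _) :=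
    hli.subset_extend _ (Set.mem_insert_of_mem _ rfl)
  have hmemα : α ∈ hli.extend (Set.subset_univ _) :=
    hli.subset_extend _ (Set.mem_insert _ _)
  have hg1 : g 1 = 1 := by
    have h6 : g (b ⟨1, hmem1⟩) = 1 := b.constr_basis F _ _
    rwa [Module.Basis.extend_apply_self] at h6
  have hgα : g α = 1 := by
    have h6 : g (b ⟨α, hmemα⟩) = 1 := b.constr_basis F _ _
    rwa [Module.Basis.extend_apply_self] at h6
  refine ⟨⟨α, hαA, g, ?_, hg1, hgα⟩, hbound, hpos⟩
  intro hg0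
  rw [hg0] at hg1
  simp at hg1
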